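/- Let (M,d₁) be a locally compact, complete metric space and let F ⊆ M be a closed set with interior dense in F which has no narrow fjords with respect to d₁. Let d₂ be another metric on M inducing the same topology which is locally bi-Lipschitz equivalent to d₁, i.e. for every compact set N ⊆ M there exists a constant C ≥ 1 such that C⁻¹·d₁(a,b) ≤ d₂(a,b) ≤ C·d₁(a,b) for all a,b ∈ N. Then F has no narrow fjords with respect to d₂. -/

import Mathlib

open Set Metric

/-- The set of sums `∑ d (γ tᵢ) (γ tᵢ₊₁)` over partitions `0 = t₀ ≤ t₁ ≤ ⋯ ≤ tₙ = 1`
of the unit interval, for a path `γ` and a distance function `d`. -/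
def partitionSums {M : Type*} (d : M → M → ℝ) (γ : ℝ → M) : Set ℝ :=
  { L | ∃ (n : ℕ) (t : Fin (n + 1) → ℝ), Monotone t ∧ t 0 = 0 ∧ t (Fin.last n) = 1 ∧
      L = ∑ i : Fin n, d (γ (t i.castSucc)) (γ (t i.succ)) }

/-- The length of the path `γ : [0,1] → M` with respect to the distance `d`:
the total variation, i.e. the supremum of the sums over partitions of `[0,1]`. -/
noncomputable def pathLength {M : Type*} (d : M → M → ℝ) (γ : ℝ → M) : ℝ :=
  sSup (partitionSums d γ)

/-- A path is rectifiable w.r.t. `d` if its partition sums are bounded above,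
i.e. its total variation is finite. -/
def IsRectifiable {M : Type*} (d : M → M → ℝ) (γ : ℝ → M) : Prop :=
  BddAbove (partitionSums d γ)

/-- A closed set `F` (with dense interior) in a topological space equipped with a distance
function `d` has no narrow fjords: every `x ∈ F` has a compact neighborhood `K` in `F`,
an integer `p ≥ 1` and a constant `D > 0` such that any two points `y, z ∈ K` can be joined
by a rectifiable path in `F` lying in the interior of `F` except possibly at finitely many
points, with `d y z ≥ D * (length γ)^p`. -/
def NoNarrowFjords {M : Type*} [TopologicalSpace M] (d : M → M → ℝ) (F : Set M) : Prop :=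
  ∀ x ∈ F, ∃ (p : ℕ) (K : Set M) (D : ℝ), 1 ≤ p ∧ IsCompact K ∧ K ⊆ F ∧
    K ∈ nhdsWithin x F ∧ 0 < D ∧
    ∀ y ∈ K, ∀ z ∈ K, ∃ γ : ℝ → M,
      ContinuousOn γ (Icc (0 : ℝ) 1) ∧ γ 0 = y ∧ γ 1 = z ∧
      (∀ t ∈ Icc (0 : ℝ) 1, γ t ∈ F) ∧
      IsRectifiable d γ ∧
      (∃ S : Finset M, ∀ t ∈ Icc (0 : ℝ) 1, γ t ∉ S → γ t ∈ interior F) ∧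
      d y z ≥ D * pathLength d γ ^ p

lemma pair_mem_partitionSums {M : Type*} (d : M → M → ℝ) (γ : ℝ → M) :
    d (γ 0) (γ 1) ∈ partitionSums d γ := by
  refine ⟨1, ![0, 1], ?_, ?_, ?_, ?_⟩
  · intro i j hij
    fin_cases i <;> fin_cases j <;> simp_all <;> norm_num
  · simp
  · simp [Fin.last]
  · simp [Fin.sum_univ_one]

lemma partition_mem_Icc {n : ℕ} {t : Fin (n + 1) → ℝ} (hm : Monotone t)
    (h0 : t 0 = 0) (h1 : t (Fin.last n) = 1) (i : Fin (n + 1)) : t i ∈ Icc (0 : ℝ) 1 :=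
  ⟨h0 ▸ hm (Fin.zero_le i), h1 ▸ hm (Fin.le_last i)⟩

lemma partitionSums_le {M : Type*} (d₁ d₂ : M → M → ℝ) (γ : ℝ → M) (C : ℝ)
    (hC : 0 ≤ C) (hrect : IsRectifiable d₁ γ)
    (hbd : ∀ s ∈ Icc (0:ℝ) 1, ∀ u ∈ Icc (0:ℝ) 1, d₂ (γ s) (γ u) ≤ C * d₁ (γ s) (γ u)) :
    ∀ L ∈ partitionSums d₂ γ, L ≤ C * pathLength d₁ γ := by
  rintro L ⟨n, t, hmono, h0, h1, rfl⟩
  have hIcc := partition_mem_Icc hmono h0 h1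
  calc ∑ i : Fin n, d₂ (γ (t i.castSucc)) (γ (t i.succ))
      ≤ ∑ i : Fin n, C * d₁ (γ (t i.castSucc)) (γ (t i.succ)) :=
        Finset.sum_le_sum fun i _ => hbd _ (hIcc _) _ (hIcc _)
    _ = C * ∑ i : Fin n, d₁ (γ (t i.castSucc)) (γ (t i.succ)) := by rw [Finset.mul_sum]
    _ ≤ C * pathLength d₁ γ :=
        mul_le_mul_of_nonneg_left (le_csSup hrect ⟨n, t, hmono, h0, h1, rfl⟩) hC

lemma dist_zero_le_pathLength {M : Type*} [PseudoMetricSpace M] (γ : ℝ → M)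
    (hrect : IsRectifiable (fun a b => dist a b) γ) {s : ℝ} (hs : s ∈ Icc (0:ℝ) 1) :
    dist (γ 0) (γ s) ≤ pathLength (fun a b => dist a b) γ := by
  have hmem : dist (γ 0) (γ s) + dist (γ s) (γ 1)
      ∈ partitionSums (fun a b => dist a b) γ := by
    refine ⟨2, ![0, s, 1], ?_, ?_, ?_, ?_⟩
    · intro i j hij
      fin_cases i <;> fin_cases j <;> simp_all <;> first | linarith [hs.1, hs.2] | norm_num
    · simp
    · simp [Fin.last]
    · simp [Fin.sum_univ_two]
  have h := le_csSup hrect hmem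
  have hd : (0:ℝ) ≤ dist (γ s) (γ 1) := dist_nonneg
  unfold pathLength
  linarith

theorem noNarrowFjords_transfer_locally_biLipschitz
    {M : Type*} [MetricSpace M] [LocallyCompactSpace M] [CompleteSpace M]
    (F : Set M) (hF : IsClosed F) (hreg : F ⊆ closure (interior F))
    (h1 : NoNarrowFjords (fun a b => dist a b) F)
    (d₂ : M → M → ℝ)
    (h2self : ∀ x, d₂ x x = 0)
    (h2eq : ∀ x y, d₂ x y = 0 → x = y)
    (h2symm : ∀ x y, d₂ x y = d₂ y x)
    (h2tri : ∀ x y z, d₂ x z ≤ d₂ x y + d₂ y z)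
    (h2top : ∀ x : M, (nhds x).HasBasis (fun ε : ℝ => 0 < ε) (fun ε => {y | d₂ x y < ε}))
    (hLip : ∀ N : Set M, IsCompact N → ∃ C : ℝ, 1 ≤ C ∧
      ∀ a ∈ N, ∀ b ∈ N, C⁻¹ * dist a b ≤ d₂ a b ∧ d₂ a b ≤ C * dist a b) :
    NoNarrowFjords d₂ F := by
  have h2nonneg : ∀ a b : M, 0 ≤ d₂ a b := by
    intro a b
    have := h2tri a b a
    rw [h2self a, h2symm b a] at this
    linarith
  intro x hx
  obtain ⟨p, K, D, hp, hK, hKF, hKnhds, hD, hpath⟩ := h1 x hx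
  obtain ⟨N, hN, hKN⟩ := exists_compact_superset hK
  obtain ⟨ε, hε, hthick⟩ := hK.exists_thickening_subset_open isOpen_interior hKN
  obtain ⟨C, hC1, hC⟩ := hLip N hN
  have hC0 : (0:ℝ) < C := lt_of_lt_of_le one_pos hC1
  set δ : ℝ := min 1 (D * (ε/2)^p / 2) with hδdef
  have hδ : 0 < δ := lt_min one_pos (by positivity)
  refine ⟨p, K ∩ closedBall x δ, D * C⁻¹^(p+1), hp, hK.inter_right isClosed_closedBall,
    inter_subset_left.trans hKF,
    Filter.inter_mem hKnhds (nhdsWithin_le_nhds (closedBall_mem_nhds x hδ)),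
    by positivity, ?_⟩
  rintro y ⟨hyK, hyB⟩ z ⟨hzK, hzB⟩
  obtain ⟨γ, hγc, hγ0, hγ1, hγF, hγrect, hS, hlen⟩ := hpath y hyK z hzK
  have hdyz : dist y z ≤ D * (ε/2)^p := by
    have ht : dist y z ≤ dist y x + dist x z := dist_triangle _ _ _
    have h2 : dist y x ≤ δ := mem_closedBall.mp hyB
    have h3 : dist x z ≤ δ := by rw [dist_comm]; exact mem_closedBall.mp hzB
    have hm : δ ≤ D * (ε/2)^p / 2 := min_le_right _ _
    linarith
  set ℓ₁ := pathLength (fun a b => dist a b) γ with hℓ₁def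
  have hℓ₁0 : 0 ≤ ℓ₁ :=
    le_trans dist_nonneg (le_csSup hγrect (pair_mem_partitionSums _ γ))
  have hℓ₁p : ℓ₁ ^ p ≤ (ε/2) ^ p := by
    have h := hlen
    have : D * ℓ₁ ^ p ≤ D * (ε/2)^p := le_trans h hdyz
    exact le_of_mul_le_mul_left this hD
  have hℓ₁ε : ℓ₁ ≤ ε/2 :=
    le_of_pow_le_pow_left₀ (by omega) (by positivity) hℓ₁p
  have himg : ∀ t ∈ Icc (0:ℝ) 1, γ t ∈ N := by
    intro t ht
    have h := dist_zero_le_pathLength γ hγrect ht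
    have hmem : γ t ∈ thickening ε K := by
      rw [mem_thickening_iff]
      refine ⟨y, hyK, ?_⟩
      rw [dist_comm, ← hγ0]
      calc dist (γ 0) (γ t) ≤ ℓ₁ := h
        _ ≤ ε/2 := hℓ₁ε
        _ < ε := by linarith
    exact interior_subset (hthick hmem)
  have hbd : ∀ s ∈ Icc (0:ℝ) 1, ∀ u ∈ Icc (0:ℝ) 1,
      d₂ (γ s) (γ u) ≤ C * dist (γ s) (γ u) :=
    fun s hs u hu => (hC _ (himg s hs) _ (himg u hu)).2
  have hle := partitionSums_le (fun a b => dist a b) d₂ γ C hC0.le hγrect hbd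
  have hrect₂ : IsRectifiable d₂ γ := ⟨_, hle⟩
  have hℓ₂le : pathLength d₂ γ ≤ C * ℓ₁ :=
    csSup_le ⟨_, pair_mem_partitionSums d₂ γ⟩ hle
  have hℓ₂0 : 0 ≤ pathLength d₂ γ :=
    le_trans (h2nonneg _ _) (le_csSup hrect₂ (pair_mem_partitionSums d₂ γ))
  refine ⟨γ, hγc, hγ0, hγ1, hγF, hrect₂, hS, ?_⟩
  have hyN : y ∈ N := interior_subset (hKN hyK)
  have hzN : z ∈ N := interior_subset (hKN hzK)
  have hlow : C⁻¹ * dist y z ≤ d₂ y z := (hC y hyN z hzN).1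
  have h1' : pathLength d₂ γ ^ p ≤ (C * ℓ₁) ^ p := pow_le_pow_left₀ hℓ₂0 hℓ₂le p
  have h2' : D * C⁻¹^(p+1) * pathLength d₂ γ ^ p ≤ D * C⁻¹^(p+1) * (C * ℓ₁) ^ p :=
    mul_le_mul_of_nonneg_left h1' (by positivity)
  have h3' : D * C⁻¹^(p+1) * (C * ℓ₁) ^ p = C⁻¹ * (D * ℓ₁ ^ p) := by
    rw [mul_pow]
    have hCne : C ≠ 0 := ne_of_gt hC0
    field_simp
    rw [one_div, inv_pow, pow_succ]
    field_simp
  have h4' : C⁻¹ * (D * ℓ₁ ^ p) ≤ C⁻¹ * dist y z :=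
    mul_le_mul_of_nonneg_left hlen (by positivity)
  calc D * C⁻¹^(p+1) * pathLength d₂ γ ^ p
      ≤ C⁻¹ * (D * ℓ₁ ^ p) := by rw [← h3']; exact h2'
    _ ≤ C⁻¹ * dist y z := h4'
    _ ≤ d₂ y z := hlow
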